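/- A behaviour admits an LHV model if and only if it admits a fully deterministic separable model with finitely many hidden variables (Fine's theorem, equivalence of the three conditions: LHV-modelability, existence of a global joint distribution, and deterministic separable decomposition). -/

import Mathlib

open Finset MeasureTheory

section Framework

variable {I : Type} [Fintype I] [DecidableEq I]
  {M : I → Type} [∀ i, Fintype (M i)] [∀ i, DecidableEq (M i)]
  {O : I → Type} [∀ i, Fintype (O i)] [∀ i, DecidableEq (O i)]

/-- A behaviour: a family of probability distributions over joint outcomes, one per input tuple. -/
def IsBehaviour (p : (∀ i, M i) → (∀ i, O i) → ℝ) : Prop :=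
  (∀ x a, 0 ≤ p x a) ∧ ∀ x, ∑ a, p x a = 1

/-- No-signalling: the marginal over party `i`'s outcome does not depend on party `i`'s input. -/
def NoSignalling (p : (∀ i, M i) → (∀ i, O i) → ℝ) : Prop :=
  ∀ (x x' : ∀ i, M i) (i : I), (∀ j, j ≠ i → x j = x' j) →
    ∀ a : ∀ i, O i,
      ∑ b : O i, p x (Function.update a i b) = ∑ b : O i, p x' (Function.update a i b)

/-- Local hidden variable model (measure-theoretic form): a probability measure on a hidden
variable space together with local response distributions. -/
def IsLHV (p : (∀ i, M i) → (∀ i, O i) → ℝ) : Prop :=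
  ∃ (Λ : Type) (_ : MeasurableSpace Λ) (μ : Measure Λ),
    IsProbabilityMeasure μ ∧
    ∃ R : (i : I) → M i → Λ → O i → ℝ,
      (∀ i xi l a, 0 ≤ R i xi l a) ∧
      (∀ i xi l, ∑ a, R i xi l a = 1) ∧
      (∀ i xi a, Measurable (fun l => R i xi l a)) ∧
      ∀ x a, p x a = ∫ l, (∏ i, R i (x i) l (a i)) ∂μ

/-- Fully deterministic separable model with finitely many hidden variables. -/
def IsLHVFin (p : (∀ i, M i) → (∀ i, O i) → ℝ) : Prop :=
  ∃ (k : ℕ) (w : Fin k → ℝ) (α : (i : I) → M i → Fin k → O i),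
    (∀ l, 0 ≤ w l) ∧ (∑ l, w l = 1) ∧
    ∀ x a, p x a = ∑ l, w l * ∏ i, (if a i = α i (x i) l then (1 : ℝ) else 0)

/-- `J` is a joint probability distribution over all potential outcomes of all measurements of
all parties which reproduces the behaviour `p` by marginalization. -/
def IsJointFor (p : (∀ i, M i) → (∀ i, O i) → ℝ) (J : (∀ i, M i → O i) → ℝ) : Prop :=
  (∀ g, 0 ≤ J g) ∧ (∑ g, J g = 1) ∧
  ∀ x a, p x a = ∑ g ∈ Finset.univ.filter (fun g : ∀ i, M i → O i => ∀ i, g i (x i) = a i), J g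

/-- Local Agency: the marginal on any subset `V` of parties depends only on the inputs of `V`. -/
def LocalAgency (q : (∀ i, M i) → (∀ i, O i) → ℝ) : Prop :=
  ∀ (V : Finset I) (x x' : ∀ i, M i), (∀ i ∈ V, x i = x' i) →
    ∀ a : ∀ i, O i,
      ∑ b ∈ Finset.univ.filter (fun b : ∀ i, O i => ∀ i ∈ V, b i = a i), q x b
        = ∑ b ∈ Finset.univ.filter (fun b : ∀ i, O i => ∀ i ∈ V, b i = a i), q x' b

/-- Local Friendliness decomposition for friend set `F`, where `one i` is the distinguished
(query) input of party `i`. -/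
def IsLF (F : Finset I) (one : ∀ i, M i)
    (p : (∀ i, M i) → (∀ i, O i) → ℝ) : Prop :=
  ∃ (P : (∀ i : {j // j ∈ F}, O i.1) → ℝ)
    (Q : (∀ i : {j // j ∈ F}, O i.1) → (∀ i, M i) → (∀ i, O i) → ℝ),
    (∀ c, 0 ≤ P c) ∧ (∑ c, P c = 1) ∧
    (∀ c x a, 0 ≤ Q c x a) ∧ (∀ c x, ∑ a, Q c x a = 1) ∧
    (∀ c, LocalAgency (Q c)) ∧
    (∀ c x a, (∃ i : {j // j ∈ F}, x i.1 = one i.1 ∧ a i.1 ≠ c i) → Q c x a = 0) ∧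
    ∀ x a, p x a = ∑ c, P c * Q c x a

end Framework

set_option maxHeartbeats 1000000

section Helpers

lemma sum_pi_prod {ι : Type*} [Fintype ι] [DecidableEq ι] {κ : ι → Type*}
    [∀ i, Fintype (κ i)] (f : ∀ i, κ i → ℝ) :
    ∑ g : ∀ i, κ i, ∏ i, f i (g i) = ∏ i, ∑ j, f i j := by
  rw [Finset.prod_univ_sum, Fintype.piFinset_univ]

lemma sum_fun_single {β γ : Type*} [Fintype β] [DecidableEq β] [Fintype γ] [DecidableEq γ]
    (f : β → γ → ℝ) (hf : ∀ b, ∑ c, f b c = 1) (b0 : β) (c0 : γ) :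
    ∑ h : β → γ, (if h b0 = c0 then ∏ b, f b (h b) else 0) = f b0 c0 := by
  have h1 := sum_pi_prod (fun b (c : γ) => if b = b0 then (if c = c0 then f b c else 0) else f b c)
  have key : ∀ h : β → γ, (if h b0 = c0 then ∏ b, f b (h b) else 0)
      = ∏ b, (if b = b0 then (if h b = c0 then f b (h b) else 0) else f b (h b)) := by
    intro h
    by_cases hc : h b0 = c0
    · rw [if_pos hc]
      refine Finset.prod_congr rfl fun b _ => ?_
      by_cases hb : b = b0
      · subst hb; simp [hc]
      · simp [hb]
    · rw [if_neg hc]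
      symm
      exact Finset.prod_eq_zero (Finset.mem_univ b0) (by simp [hc])
  refine Eq.trans (Finset.sum_congr rfl fun h _ => key h) (h1.trans ?_)
  have h2 : ∀ b : β, (∑ c : γ, if b = b0 then (if c = c0 then f b c else 0) else f b c)
      = if b = b0 then f b c0 else 1 := by
    intro b
    by_cases hb : b = b0
    · simp [hb]
    · simp [hb, hf b]
  rw [Finset.prod_congr rfl fun b _ => h2 b]
  simp

variable {I : Type} [Fintype I] [DecidableEq I]
  {M : I → Type} [∀ i, Fintype (M i)] [∀ i, DecidableEq (M i)]
  {O : I → Type} [∀ i, Fintype (O i)] [∀ i, DecidableEq (O i)]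

lemma total_pi_sum (f : ∀ i, M i → O i → ℝ) (hf : ∀ i xi, ∑ a, f i xi a = 1) :
    ∑ g : ∀ i, M i → O i, ∏ i, ∏ xi, f i xi (g i xi) = 1 := by
  have h1 := sum_pi_prod (fun i (h : M i → O i) => ∏ xi, f i xi (h xi))
  rw [h1]
  have h2 : ∀ i : I, ∑ h : M i → O i, ∏ xi, f i xi (h xi) = 1 := by
    intro i
    have := sum_pi_prod (fun xi (a : O i) => f i xi a)
    rw [this]
    simp [hf]
  simp [h2]

lemma filtered_pi_sum (f : ∀ i, M i → O i → ℝ) (hf : ∀ i xi, ∑ a, f i xi a = 1)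
    (x : ∀ i, M i) (a : ∀ i, O i) :
    ∑ g ∈ Finset.univ.filter (fun g : ∀ i, M i → O i => ∀ i, g i (x i) = a i),
      ∏ i, ∏ xi, f i xi (g i xi) = ∏ i, f i (x i) (a i) := by
  rw [Finset.sum_filter]
  have h1 := sum_pi_prod
    (fun i (h : M i → O i) => if h (x i) = a i then ∏ xi, f i xi (h xi) else 0)
  have key : ∀ g : ∀ i, M i → O i,
      (if ∀ i, g i (x i) = a i then ∏ i, ∏ xi, f i xi (g i xi) else 0)
      = ∏ i, (if g i (x i) = a i then ∏ xi, f i xi (g i xi) else 0) := by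
    intro g
    by_cases h : ∀ i, g i (x i) = a i
    · rw [if_pos h]
      exact Finset.prod_congr rfl fun i _ => by simp [h i]
    · rw [if_neg h]
      push_neg at h
      obtain ⟨i, hi⟩ := h
      symm
      exact Finset.prod_eq_zero (Finset.mem_univ i) (by simp [hi])
  refine Eq.trans (Finset.sum_congr rfl fun g _ => key g) (h1.trans ?_)
  exact Finset.prod_congr rfl fun i _ =>
    sum_fun_single (fun xi o => f i xi o) (hf i) (x i) (a i)

end Helpers

section FineProof

variable {I : Type} [Fintype I] [DecidableEq I]
  {M : I → Type} [∀ i, Fintype (M i)] [∀ i, DecidableEq (M i)]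
  {O : I → Type} [∀ i, Fintype (O i)] [∀ i, DecidableEq (O i)]

/-- LHV implies the existence of a joint distribution. -/
lemma lhv_to_joint (p : (∀ i, M i) → (∀ i, O i) → ℝ) (h : IsLHV p) :
    ∃ J : (∀ i, M i → O i) → ℝ, IsJointFor p J := by
  obtain ⟨Λ, mΛ, μ, hμ, R, hR0, hR1, hRm, hp⟩ := h
  have hR1' : ∀ i xi l a, R i xi l a ≤ 1 := by
    intro i xi l a
    calc R i xi l a ≤ ∑ b, R i xi l b :=
          Finset.single_le_sum (fun b _ => hR0 i xi l b) (Finset.mem_univ a)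
      _ = 1 := hR1 i xi l
  set F : (∀ i, M i → O i) → Λ → ℝ := fun g l => ∏ i, ∏ xi, R i xi l (g i xi) with hF
  have hFm : ∀ g, Measurable (F g) := by
    intro g
    exact Finset.measurable_prod _ fun i _ =>
      Finset.measurable_prod _ fun xi _ => hRm i xi (g i xi)
  have hF0 : ∀ g l, 0 ≤ F g l := fun g l =>
    Finset.prod_nonneg fun i _ => Finset.prod_nonneg fun xi _ => hR0 i xi l (g i xi)
  have hFle : ∀ g l, F g l ≤ 1 := fun g l =>
    Finset.prod_le_one (fun i _ => Finset.prod_nonneg fun xi _ => hR0 i xi l (g i xi))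
      (fun i _ => Finset.prod_le_one (fun xi _ => hR0 i xi l (g i xi))
        (fun xi _ => hR1' i xi l (g i xi)))
  have hFint : ∀ g, Integrable (F g) μ := by
    intro g
    refine Integrable.mono' (integrable_const 1) (hFm g).aestronglyMeasurable ?_
    filter_upwards with l
    rw [Real.norm_eq_abs, abs_of_nonneg (hF0 g l)]
    exact hFle g l
  refine ⟨fun g => ∫ l, F g l ∂μ, fun g => integral_nonneg (hF0 g), ?_, ?_⟩
  · rw [← integral_finset_sum _ fun g _ => hFint g]
    have : ∀ l, ∑ g : ∀ i, M i → O i, F g l = 1 := fun l =>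
      total_pi_sum (fun i xi a => R i xi l a) (fun i xi => hR1 i xi l)
    rw [integral_congr_ae (Filter.Eventually.of_forall this)]
    simp
  · intro x a
    rw [← integral_finset_sum _ fun g _ => hFint g]
    have : ∀ l, ∑ g ∈ Finset.univ.filter (fun g : ∀ i, M i → O i => ∀ i, g i (x i) = a i),
        F g l = ∏ i, R i (x i) l (a i) := fun l =>
      filtered_pi_sum (fun i xi a => R i xi l a) (fun i xi => hR1 i xi l) x a
    rw [integral_congr_ae (Filter.Eventually.of_forall this)]
    exact hp x a

/-- A joint distribution yields a finite deterministic model. -/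
lemma joint_to_fin (p : (∀ i, M i) → (∀ i, O i) → ℝ)
    (h : ∃ J : (∀ i, M i → O i) → ℝ, IsJointFor p J) : IsLHVFin p := by
  obtain ⟨J, hJ0, hJ1, hJm⟩ := h
  set e := Fintype.equivFin (∀ i, M i → O i) with he
  refine ⟨Fintype.card (∀ i, M i → O i), fun l => J (e.symm l),
    fun i xi l => e.symm l i xi, fun l => hJ0 _, ?_, ?_⟩
  · rw [Equiv.sum_comp e.symm J]
    exact hJ1
  · intro x a
    rw [hJm x a, Finset.sum_filter]
    rw [← Equiv.sum_comp e.symm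
      (fun g => if ∀ i, g i (x i) = a i then J g else 0)]
    refine Finset.sum_congr rfl fun l _ => ?_
    by_cases hc : ∀ i, e.symm l i (x i) = a i
    · rw [if_pos hc]
      have : ∀ i : I, (if a i = e.symm l i (x i) then (1:ℝ) else 0) = 1 := fun i => by
        rw [if_pos (hc i).symm]
      rw [Finset.prod_congr rfl fun i _ => this i]
      simp
    · rw [if_neg hc]
      push_neg at hc
      obtain ⟨i, hi⟩ := hc
      rw [Finset.prod_eq_zero (Finset.mem_univ i) (by rw [if_neg (fun hh => hi hh.symm)])]
      simp

/-- A finite deterministic model yields an LHV model. -/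
lemma fin_to_lhv (p : (∀ i, M i) → (∀ i, O i) → ℝ) (h : IsLHVFin p) : IsLHV p := by
  obtain ⟨k, w, α, hw0, hw1, hp⟩ := h
  refine ⟨Fin k, ⊤, ∑ l : Fin k, ENNReal.ofReal (w l) • Measure.dirac l, ?_,
    fun i xi l a => if a = α i xi l then 1 else 0,
    fun i xi l a => by positivity, fun i xi l => by simp, fun i xi a => measurable_from_top, ?_⟩
  · constructor
    rw [Measure.coe_finset_sum]
    simp only [Finset.sum_apply, Measure.smul_apply, smul_eq_mul, measure_univ, mul_one]
    rw [← ENNReal.ofReal_sum_of_nonneg fun l _ => hw0 l, hw1, ENNReal.ofReal_one]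
  · intro x a
    rw [hp x a]
    have hfin : ∀ l : Fin k,
        IsFiniteMeasure (ENNReal.ofReal (w l) • (Measure.dirac l : Measure (Fin k))) := by
      intro l
      constructor
      rw [Measure.smul_apply, measure_univ, smul_eq_mul, mul_one]
      exact ENNReal.ofReal_lt_top
    have hint : ∀ l ∈ Finset.univ, Integrable
        (fun l' : Fin k => ∏ i, (if a i = α i (x i) l' then (1:ℝ) else 0))
        (ENNReal.ofReal (w l) • Measure.dirac l) := by
      intro l _
      haveI := hfin l
      refine Integrable.mono' (integrable_const 1)
        measurable_from_top.aestronglyMeasurable ?_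
      filter_upwards with l'
      rw [Real.norm_eq_abs, abs_of_nonneg (Finset.prod_nonneg fun i _ => by positivity)]
      exact Finset.prod_le_one (fun i _ => by positivity)
        (fun i _ => by split <;> norm_num)
    rw [integral_finset_sum_measure hint]
    refine Finset.sum_congr rfl fun l _ => ?_
    rw [integral_smul_measure,
      integral_dirac' _ l measurable_from_top.stronglyMeasurable,
      smul_eq_mul, ENNReal.toReal_ofReal (hw0 l)]

end FineProof

/-- Fine's theorem: a behaviour admits an LHV model if and only if it admits a
fully deterministic separable model with finitely many hidden variables; both are moreover
equivalent to the existence of a global joint distribution reproducing the behaviour. -/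
theorem fine_theorem {I : Type} [Fintype I] [DecidableEq I]
    {M : I → Type} [∀ i, Fintype (M i)] [∀ i, DecidableEq (M i)]
    {O : I → Type} [∀ i, Fintype (O i)] [∀ i, DecidableEq (O i)]
    (p : (∀ i, M i) → (∀ i, O i) → ℝ) :
    (IsLHV p ↔ IsLHVFin p) ∧ (IsLHV p ↔ ∃ J : (∀ i, M i → O i) → ℝ, IsJointFor p J) := by
  exact ⟨⟨fun h => joint_to_fin p (lhv_to_joint p h), fin_to_lhv p⟩,
    ⟨lhv_to_joint p, fun h => fin_to_lhv p (joint_to_fin p h)⟩⟩
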